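/- Consider the first-order language with one n-ary relation symbol R_n for each n ∈ ℕ, the theory T consisting of all sentences ∀x₁…∀x_n (R_n(x₁,…,x_n) ↔ ∃x_{n+1} R_{n+1}(x₁,…,x_{n+1})). A model of T is equivalent to a pair (A, W) where A is a set and W is a set of finite words over A that is closed under prefixes and such that every word in W is a proper prefix of some word in W. Prefix Lemma: for variables x₁,…,x_k and finite families of atomic formulas R_{m_i}(x_{f_i(1)},…,x_{f_i(m_i)}) (i = 1,…,ī) and R_{n_j}(x_{g_j(1)},…,x_{g_j(n_j)}) (j = 1,…,j̄), the entailment T ⊨ (⋀_i R_{m_i}(x_{f_i(1)},…,x_{f_i(m_i)})) → (⋁_j R_{n_j}(x_{g_j(1)},…,x_{g_j(n_j)})) holds if and only if there exist i₀ and j₀ such that the tuple (x_{g_{j₀}(1)},…,x_{g_{j₀}(n_{j₀})}) is a prefix of the tuple (x_{f_{i₀}(1)},…,x_{f_{i₀}(m_{i₀})}). -/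

import Mathlib

/-- A model of the theory `T` (of the language with one `n`-ary relation `R_n` for each `n`,
axiomatized by `R_n(x₁,…,xₙ) ↔ ∃x_{n+1} R_{n+1}(x₁,…,x_{n+1})`), presented semantically:
a set `W` of finite words over `A` closed under prefixes and such that every word of `W`
is a proper prefix of some word of `W`. -/
def IsWordsModel {A : Type} (W : Set (List A)) : Prop :=
  (∀ w ∈ W, ∀ v : List A, v <+: w → v ∈ W) ∧
  (∀ w ∈ W, ∃ w' ∈ W, w <+: w' ∧ w ≠ w')

/-- An injective map reflects the prefix relation. -/
lemma prefix_of_map_prefix {α β : Type} {h : α → β} (hinj : Function.Injective h)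
    {l₁ l₂ : List α} (hp : l₁.map h <+: l₂.map h) : l₁ <+: l₂ := by
  rw [List.prefix_iff_eq_take] at hp ⊢
  rw [List.length_map, ← List.map_take] at hp
  exact List.map_injective_iff.mpr hinj hp

/-- Prefix Lemma: the entailment
`T ⊨ ⋀ᵢ R_{mᵢ}(x_{fᵢ(1)},…,x_{fᵢ(mᵢ)}) → ⋁ⱼ R_{nⱼ}(x_{gⱼ(1)},…,x_{gⱼ(nⱼ)})`
holds if and only if some tuple of variables `(x_{g_{j₀}(1)},…,x_{g_{j₀}(n_{j₀})})` is a
prefix of some tuple `(x_{f_{i₀}(1)},…,x_{f_{i₀}(m_{i₀})})`. -/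
theorem prefix_lemma (k ibar jbar : ℕ) (m : Fin ibar → ℕ) (n : Fin jbar → ℕ)
    (f : ∀ i : Fin ibar, Fin (m i) → Fin k)
    (g : ∀ j : Fin jbar, Fin (n j) → Fin k) :
    (∀ (A : Type) (W : Set (List A)), IsWordsModel W →
      ∀ ρ : Fin k → A,
        (∀ i : Fin ibar, (List.ofFn fun t => ρ (f i t)) ∈ W) →
        ∃ j : Fin jbar, (List.ofFn fun t => ρ (g j t)) ∈ W) ↔
    ∃ (i : Fin ibar) (j : Fin jbar),
      (List.ofFn fun t => g j t) <+: (List.ofFn fun t => f i t) := by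
  constructor
  · intro hent
    -- countermodel: A = ℕ, ρ = Fin.val, W = prefixes of `F i ++ k·k·k⋯`
    set F : Fin ibar → List ℕ := fun i => List.ofFn fun t => (f i t : ℕ) with hF
    set W : Set (List ℕ) := { w | ∃ (i : Fin ibar) (p : ℕ),
      w <+: F i ++ List.replicate p k } with hW
    have hmodel : IsWordsModel W := by
      constructor
      · rintro w ⟨i, p, hw⟩ v hv
        exact ⟨i, p, hv.trans hw⟩
      · rintro w ⟨i, p, hw⟩
        refine ⟨F i ++ List.replicate (p + 1) k, ⟨i, p + 1, List.prefix_refl _⟩, ?_, ?_⟩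
        · refine hw.trans ?_
          have he : F i ++ List.replicate (p + 1) k
              = (F i ++ List.replicate p k) ++ [k] := by
            simp [List.replicate_succ']
          rw [he]
          exact List.prefix_append _ _
        · intro h
          have h1 : w.length ≤ (F i).length + p := by
            simpa using hw.length_le
          have h2 : w.length = (F i).length + (p + 1) := by
            simp [h]
          omega
    obtain ⟨j, i, p, hjp⟩ := hent ℕ W hmodel (fun t => (t : ℕ))
      (fun i => ⟨i, 0, by simp; exact List.prefix_refl _⟩)
    set G : List ℕ := List.ofFn fun t => ((g j t : Fin k) : ℕ) with hG
    -- G only has entries < k, so it can't reach into the replicate part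
    have hlen : G.length ≤ (F i).length := by
      by_contra hcon
      push_neg at hcon
      have hFi : (F i).length < G.length := hcon
      have h1 : (F i).length < (F i ++ List.replicate p k).length := by
        have := hjp.length_le
        simp only [List.length_append, List.length_replicate] at this ⊢
        omega
      have := hjp.getElem (i := (F i).length) hFi
      rw [List.getElem_append_right (le_refl _)] at this
      simp only [Nat.sub_self, List.getElem_replicate] at this
      have hmem : ∀ x ∈ G, x < k := by
        rw [hG]
        intro x hx
        rw [List.mem_ofFn] at hx
        obtain ⟨t, ht⟩ := hx
        exact ht ▸ (g j t).isLt
      have hlt : G[(F i).length] < k := hmem _ (List.getElem_mem _)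
      omega
    have hpre : G <+: F i := by
      rw [List.prefix_iff_eq_take] at hjp ⊢
      rwa [List.take_append_of_le_length hlen] at hjp
    refine ⟨i, j, ?_⟩
    have : (List.ofFn fun t => g j t).map (fun x : Fin k => (x : ℕ)) <+:
        (List.ofFn fun t => f i t).map (fun x : Fin k => (x : ℕ)) := by
      simpa [List.map_ofFn, Function.comp_def] using hpre
    exact prefix_of_map_prefix Fin.val_injective this
  · rintro ⟨i, j, hpre⟩ A W hmodel ρ hprem
    refine ⟨j, hmodel.1 _ (hprem i) _ ?_⟩
    have := hpre.map ρ
    simpa [List.map_ofFn, Function.comp_def] using this
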